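/- Let 0 < q < 1 and a > 0. Then for all m, m' ∈ ℕ the series below converges absolutely and the alternative q-Charlier polynomials satisfy the orthogonality relation Σ_{n=0}^{∞} [a^n q^{n(n+1)/2} / (q;q)_n] · K_m(q^n;a;q) · K_{m'}(q^n;a;q) = [(−aq^m;q)_∞ · a^m (q;q)_m / (1+aq^{2m})] · q^{m(m+1)/2} · δ_{m m'}. -/

import Mathlib

open scoped BigOperators

/-- The q-shifted factorial `(a;q)_k`. -/
noncomputable def qPoch (q a : ℝ) (k : ℕ) : ℝ :=
  ∏ j ∈ Finset.range k, (1 - a * q ^ j)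

/-- The infinite q-shifted factorial `(a;q)_∞`. -/
noncomputable def qPochInf (q a : ℝ) : ℝ :=
  ∏' j : ℕ, (1 - a * q ^ j)

/-- The alternative q-Charlier polynomials `K_n(x;a;q)`. -/
noncomputable def altQCharlier (q a : ℝ) (n : ℕ) (x : ℝ) : ℝ :=
  ∑ k ∈ Finset.range (n + 1),
    qPoch q (q ^ (-(n : ℤ))) k * qPoch q (-a * q ^ n) k / qPoch q q k * (q * x) ^ k

namespace AltQC

open Finset Filter Topology

/-! ### Natural number arithmetic helpers -/

lemma tri (n : ℕ) : n * (n + 1) / 2 = n * (n - 1) / 2 + n := by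
  have h : n * (n + 1) = n * (n - 1) + 2 * n := by
    cases n with
    | zero => rfl
    | succ k => show (k + 1) * (k + 2) = (k + 1) * k + 2 * (k + 1); ring
  rw [h, Nat.add_mul_div_left _ _ (by norm_num : 0 < 2)]

lemma tri' (n : ℕ) : (n + 1) * n / 2 = n * (n - 1) / 2 + n := by
  rw [Nat.mul_comm]; exact tri n

lemma twoT (m : ℕ) : m + m * m = m * (m + 1) / 2 + m * (m + 1) / 2 := by
  obtain ⟨t, ht⟩ := Nat.even_mul_succ_self m
  have h2 : m * (m + 1) / 2 = t := by rw [ht]; omega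
  rw [h2, show m + m * m = m * (m + 1) from by ring, ht]

/-! ### Basic qPoch facts -/

lemma qPoch_succ (q c : ℝ) (k : ℕ) :
    qPoch q c (k + 1) = qPoch q c k * (1 - c * q ^ k) := Finset.prod_range_succ _ _

lemma powle1 {x : ℝ} (h0 : 0 ≤ x) (h1 : x ≤ 1) (n : ℕ) : x ^ n ≤ 1 := by
  induction n with
  | zero => simp
  | succ k ih => rw [pow_succ]; nlinarith [pow_nonneg h0 k]

lemma qq_lt1 {q : ℝ} (hq0 : 0 < q) (hq1 : q < 1) (n : ℕ) : q * q ^ n < 1 := by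
  nlinarith [powle1 hq0.le hq1.le n, pow_pos hq0 n]

lemma qPoch_q_pos {q : ℝ} (hq0 : 0 < q) (hq1 : q < 1) (n : ℕ) : 0 < qPoch q q n := by
  apply Finset.prod_pos
  intro j _
  have := qq_lt1 hq0 hq1 j
  linarith

lemma qPoch_pos_of_nonpos {q c : ℝ} (hq0 : 0 < q) (hc : c ≤ 0) (n : ℕ) :
    0 < qPoch q c n := by
  apply Finset.prod_pos
  intro j _
  nlinarith [pow_pos hq0 j]

lemma qPoch_split (q c : ℝ) {k m : ℕ} (hk : k ≤ m) :
    qPoch q c m = qPoch q c k * ∏ i ∈ Finset.range (m - k), (1 - c * q ^ (k + i)) := by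
  conv_lhs => rw [show m = k + (m - k) from (Nat.add_sub_cancel' hk).symm]
  exact Finset.prod_range_add _ _ _

/-! ### The coefficients `Aq` and the q-Pascal rule -/

noncomputable def Aq (q : ℝ) (m k : ℕ) : ℝ := qPoch q (q ^ (-(m : ℤ))) k / qPoch q q k

lemma Aq_succ (q : ℝ) (m k : ℕ) :
    Aq q m (k + 1) = Aq q m k * ((1 - q ^ (-(m : ℤ)) * q ^ k) / (1 - q * q ^ k)) := by
  unfold Aq
  rw [qPoch_succ, qPoch_succ, mul_div_mul_comm]

lemma pascal {q : ℝ} (hq0 : 0 < q) (hq1 : q < 1) (m k : ℕ) :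
    Aq q (m + 1) (k + 1) = (q ^ (k + 1))⁻¹ * (Aq q m (k + 1) - Aq q m k) := by
  have hqne : q ≠ 0 := ne_of_gt hq0
  have hpow : ∀ j : ℕ, (1 : ℝ) - q * q ^ j ≠ 0 := fun j =>
    ne_of_gt (by have := qq_lt1 hq0 hq1 j; linarith)
  have hqm : (q : ℝ) ^ m ≠ 0 := pow_ne_zero _ hqne
  induction k with
  | zero =>
    simp only [Aq, qPoch_succ, qPoch, Finset.prod_range_zero, zpow_neg, zpow_natCast,
      pow_zero, mul_one, one_mul, zero_add, Finset.prod_range_one]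
    have h1 := hpow 0
    rw [pow_zero, mul_one] at h1
    field_simp
    ring
  | succ k ih =>
    rw [Aq_succ q (m + 1) (k + 1), ih, Aq_succ q m (k + 1), Aq_succ q m k]
    simp only [zpow_neg, zpow_natCast]
    have h1 := hpow k
    have h2 := hpow (k + 1)
    have h1' : (1 : ℝ) - q ^ k * q ≠ 0 := by rw [mul_comm]; exact h1
    have h2' : (1 : ℝ) - q ^ (k + 1) * q ≠ 0 := by rw [mul_comm]; exact h2
    field_simp
    ring

lemma Aq_zero (q : ℝ) (m : ℕ) : Aq q m 0 = 1 := by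
  simp [Aq, qPoch]

lemma Aq_top {q : ℝ} (hq0 : 0 < q) (m : ℕ) : Aq q m (m + 1) = 0 := by
  have hnum : qPoch q (q ^ (-(m : ℤ))) (m + 1) = 0 := by
    apply Finset.prod_eq_zero (Finset.self_mem_range_succ m)
    rw [zpow_neg, zpow_natCast, inv_mul_cancel₀ (pow_ne_zero _ (ne_of_gt hq0))]
    ring
  rw [Aq, hnum, zero_div]

lemma Aq_diag {q : ℝ} (hq0 : 0 < q) (hq1 : q < 1) (m : ℕ) :
    Aq q m m * q ^ (m * (m + 1) / 2) = (-1 : ℝ) ^ m := by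
  have hqne : q ≠ 0 := ne_of_gt hq0
  have hsum : ∑ j ∈ Finset.range m, (m - j) = m * (m + 1) / 2 := by
    have h1 : ∑ j ∈ Finset.range m, (m - j) = ∑ j ∈ Finset.range m, (j + 1) := by
      rw [← Finset.sum_range_reflect]
      apply Finset.sum_congr rfl
      intro j hj
      have := Finset.mem_range.mp hj
      omega
    rw [h1, Finset.sum_add_distrib, Finset.sum_range_id, Finset.sum_const,
      Finset.card_range, smul_eq_mul, mul_one, tri]
  have hpow : (q : ℝ) ^ (m * (m + 1) / 2) = ∏ j ∈ Finset.range m, q ^ (m - j) := by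
    rw [Finset.prod_pow_eq_pow_sum, hsum]
  have hnum : qPoch q (q ^ (-(m : ℤ))) m * q ^ (m * (m + 1) / 2) =
      (-1 : ℝ) ^ m * qPoch q q m := by
    rw [hpow, qPoch, ← Finset.prod_mul_distrib]
    have hfac : ∀ j ∈ Finset.range m,
        (1 - q ^ (-(m : ℤ)) * q ^ j) * q ^ (m - j) = -(1 - q * q ^ (m - j - 1)) := by
      intro j hj
      have hjm := Finset.mem_range.mp hj
      have e1 : q ^ (-(m : ℤ)) = (q ^ m)⁻¹ := by rw [zpow_neg, zpow_natCast]
      have e2 : (q : ℝ) ^ j * q ^ (m - j) = q ^ m := by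
        rw [← pow_add]; congr 1; omega
      have e3 : q * q ^ (m - j - 1) = q ^ (m - j) := by
        rw [← pow_succ']; congr 1; omega
      rw [e1, e3]
      have hqm : (q : ℝ) ^ m ≠ 0 := pow_ne_zero _ hqne
      field_simp
      linarith [e2]
    rw [Finset.prod_congr rfl hfac]
    have : ∀ j ∈ Finset.range m, -(1 - q * q ^ (m - j - 1)) =
        (-1 : ℝ) * (1 - q * q ^ (m - j - 1)) := by intro j _; ring
    rw [Finset.prod_congr rfl this, Finset.prod_mul_distrib, Finset.prod_const,
      Finset.card_range]
    congr 1
    rw [qPoch, ← Finset.prod_range_reflect (fun j => 1 - q * q ^ j) m]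
    apply Finset.prod_congr rfl
    intro j hj
    have hjm := Finset.mem_range.mp hj
    have : m - j - 1 = m - 1 - j := by omega
    rw [this]
  have hden : qPoch q q m ≠ 0 := ne_of_gt (qPoch_q_pos hq0 hq1 m)
  rw [Aq, div_mul_eq_mul_div, hnum, mul_div_assoc, div_self hden, mul_one]

/-! ### Terminating q-Chu–Vandermonde identity -/

lemma vdm {q : ℝ} (hq0 : 0 < q) (hq1 : q < 1) (b : ℝ) :
    ∀ (m : ℕ) (c : ℝ),
      ∑ k ∈ Finset.range (m + 1), Aq q m k * qPoch q b k * q ^ k *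
          ∏ i ∈ Finset.range (m - k), (1 - c * q ^ (k + i)) =
        ∏ i ∈ Finset.range m, (b - c * q ^ i) := by
  intro m
  induction m with
  | zero => intro c; simp [Aq, qPoch]
  | succ m ih =>
    intro c
    rw [Finset.sum_range_succ']
    have hstep : ∀ k ∈ Finset.range (m + 1),
        Aq q (m + 1) (k + 1) * qPoch q b (k + 1) * q ^ (k + 1) *
            ∏ i ∈ Finset.range (m + 1 - (k + 1)), (1 - c * q ^ (k + 1 + i)) =
          (Aq q m (k + 1) * qPoch q b (k + 1) *
              ∏ i ∈ Finset.range (m - k), (1 - c * q ^ (k + 1 + i))) -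
            (Aq q m k * qPoch q b (k + 1) *
              ∏ i ∈ Finset.range (m - k), (1 - c * q ^ (k + 1 + i))) := by
      intro k hk
      have hms : m + 1 - (k + 1) = m - k := by omega
      rw [hms, pascal hq0 hq1 m k]
      have hq : (q : ℝ) ^ (k + 1) ≠ 0 := pow_ne_zero _ (ne_of_gt hq0)
      field_simp
    rw [Finset.sum_congr rfl hstep, Finset.sum_sub_distrib]
    have hre := Finset.sum_range_succ' (fun k => Aq q m k * qPoch q b k *
        ∏ i ∈ Finset.range (m + 1 - k), (1 - c * q ^ (k + i))) (m + 1)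
    rw [Finset.sum_range_succ] at hre
    have htop : Aq q m (m + 1) * qPoch q b (m + 1) *
        ∏ i ∈ Finset.range (m + 1 - (m + 1)), (1 - c * q ^ (m + 1 + i)) = 0 := by
      rw [Aq_top hq0]; ring
    rw [htop] at hre
    have hshift : ∑ k ∈ Finset.range (m + 1), (Aq q m (k + 1) * qPoch q b (k + 1) *
        ∏ i ∈ Finset.range (m - k), (1 - c * q ^ (k + 1 + i))) =
        (∑ k ∈ Finset.range (m + 1), Aq q m k * qPoch q b k *
          ∏ i ∈ Finset.range (m + 1 - k), (1 - c * q ^ (k + i))) -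
          (Aq q m 0 * qPoch q b 0 *
            ∏ i ∈ Finset.range (m + 1 - 0), (1 - c * q ^ (0 + i))) := by
      have heq : ∀ k ∈ Finset.range (m + 1), (Aq q m (k + 1) * qPoch q b (k + 1) *
          ∏ i ∈ Finset.range (m - k), (1 - c * q ^ (k + 1 + i))) =
          (Aq q m (k + 1) * qPoch q b (k + 1) *
          ∏ i ∈ Finset.range (m + 1 - (k + 1)), (1 - c * q ^ (k + 1 + i))) := by
        intro k hk
        have hms : m + 1 - (k + 1) = m - k := by omega
        rw [hms]
      rw [Finset.sum_congr rfl heq]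
      linarith [hre]
    rw [hshift]
    have hA0 : Aq q (m + 1) 0 * qPoch q b 0 * q ^ 0 *
        ∏ i ∈ Finset.range (m + 1 - 0), (1 - c * q ^ (0 + i)) =
        Aq q m 0 * qPoch q b 0 * ∏ i ∈ Finset.range (m + 1 - 0), (1 - c * q ^ (0 + i)) := by
      rw [Aq_zero, Aq_zero]; ring
    rw [hA0]
    have hcomb : (∑ k ∈ Finset.range (m + 1), Aq q m k * qPoch q b k *
          ∏ i ∈ Finset.range (m + 1 - k), (1 - c * q ^ (k + i))) -
        (∑ k ∈ Finset.range (m + 1), Aq q m k * qPoch q b (k + 1) *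
          ∏ i ∈ Finset.range (m - k), (1 - c * q ^ (k + 1 + i))) =
        (b - c) * ∑ k ∈ Finset.range (m + 1), Aq q m k * qPoch q b k * q ^ k *
          ∏ i ∈ Finset.range (m - k), (1 - c * q * q ^ (k + i)) := by
      rw [← Finset.sum_sub_distrib, Finset.mul_sum]
      apply Finset.sum_congr rfl
      intro k hk
      have hk' : k ≤ m := by have := Finset.mem_range.mp hk; omega
      have hms : m + 1 - k = (m - k) + 1 := by omega
      rw [hms, Finset.prod_range_succ']
      have hprod1 : ∀ i ∈ Finset.range (m - k),
          (1 : ℝ) - c * q ^ (k + (i + 1)) = 1 - c * q * q ^ (k + i) := by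
        intro i _
        have h : (q : ℝ) ^ (k + (i + 1)) = q ^ (k + i) * q := by
          rw [show k + (i + 1) = (k + i) + 1 from rfl, pow_succ]
        rw [h]; ring
      have hprod2 : ∀ i ∈ Finset.range (m - k),
          (1 : ℝ) - c * q ^ (k + 1 + i) = 1 - c * q * q ^ (k + i) := by
        intro i _
        have h : (q : ℝ) ^ (k + 1 + i) = q ^ (k + i) * q := by
          rw [← pow_succ]; congr 1; omega
        rw [h]; ring
      rw [Finset.prod_congr rfl hprod1, Finset.prod_congr rfl hprod2, qPoch_succ]
      ring
    have hih := ih (c * q)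
    have hrhs : ∏ i ∈ Finset.range (m + 1), (b - c * q ^ i) =
        (∏ i ∈ Finset.range m, (b - c * q * q ^ i)) * (b - c) := by
      rw [Finset.prod_range_succ']
      congr 1
      · apply Finset.prod_congr rfl
        intro i _
        rw [pow_succ]
        ring
      · rw [pow_zero, mul_one]
    rw [hrhs, ← hih]
    linear_combination hcomb

/-! ### Euler's identity machinery -/

noncomputable def eTerm (q t : ℝ) (n : ℕ) : ℝ := t ^ n * q ^ (n * (n - 1) / 2) / qPoch q q n

noncomputable def eulerSum (q t : ℝ) : ℝ := ∑' n, eTerm q t n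

noncomputable def phiF (q a : ℝ) (j : ℕ) : ℝ := eulerSum q (a * q ^ (j + 1))

lemma eTerm_zero (q t : ℝ) : eTerm q t 0 = 1 := by
  simp [eTerm, qPoch]

lemma eTerm_nonneg {q t : ℝ} (hq0 : 0 < q) (hq1 : q < 1) (ht : 0 ≤ t) (n : ℕ) :
    0 ≤ eTerm q t n := by
  apply div_nonneg _ (qPoch_q_pos hq0 hq1 n).le
  positivity

lemma eTerm_succ {q : ℝ} (hq0 : 0 < q) (hq1 : q < 1) (t : ℝ) (n : ℕ) :
    eTerm q t (n + 1) = eTerm q t n * (t * q ^ n / (1 - q * q ^ n)) := by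
  have hP := ne_of_gt (qPoch_q_pos hq0 hq1 n)
  have h1 : (1 : ℝ) - q * q ^ n ≠ 0 := ne_of_gt (by have := qq_lt1 hq0 hq1 n; linarith)
  simp only [eTerm, Nat.add_sub_cancel, tri', pow_add, qPoch_succ]
  field_simp

lemma summable_eTerm {q : ℝ} (hq0 : 0 < q) (hq1 : q < 1) {t : ℝ} (ht : 0 ≤ t) :
    Summable (eTerm q t) := by
  apply summable_of_ratio_norm_eventually_le (r := 1 / 2) (by norm_num)
  have hten : Tendsto (fun n : ℕ => t * q ^ n) atTop (𝓝 0) := by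
    have := (tendsto_pow_atTop_nhds_zero_of_lt_one hq0.le hq1).const_mul t
    simpa using this
  have hev : ∀ᶠ n : ℕ in atTop, t * q ^ n < (1 - q) / 2 :=
    hten.eventually_lt_const (by linarith)
  filter_upwards [hev] with n hn
  have h1 : (0 : ℝ) < 1 - q * q ^ n := by have := qq_lt1 hq0 hq1 n; linarith
  have h2 : (1 : ℝ) - q ≤ 1 - q * q ^ n := by
    nlinarith [powle1 hq0.le hq1.le n]
  have hratio : t * q ^ n / (1 - q * q ^ n) ≤ 1 / 2 := by
    rw [div_le_iff₀ h1]
    nlinarith [pow_nonneg hq0.le n]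
  rw [eTerm_succ hq0 hq1 t n, norm_mul]
  have hnn : 0 ≤ t * q ^ n / (1 - q * q ^ n) := by positivity
  rw [Real.norm_eq_abs (t * q ^ n / (1 - q * q ^ n)), abs_of_nonneg hnn]
  calc ‖eTerm q t n‖ * (t * q ^ n / (1 - q * q ^ n)) ≤ ‖eTerm q t n‖ * (1 / 2) :=
        mul_le_mul_of_nonneg_left hratio (norm_nonneg _)
    _ = 1 / 2 * ‖eTerm q t n‖ := by ring

lemma one_le_eulerSum {q : ℝ} (hq0 : 0 < q) (hq1 : q < 1) {t : ℝ} (ht : 0 ≤ t) :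
    1 ≤ eulerSum q t := by
  have h := Summable.le_tsum (summable_eTerm hq0 hq1 ht) 0
    (fun j _ => eTerm_nonneg hq0 hq1 ht j)
  rw [eTerm_zero] at h
  exact h

lemma euler_fe {q : ℝ} (hq0 : 0 < q) (hq1 : q < 1) {t : ℝ} (ht : 0 ≤ t) :
    eulerSum q t = (1 + t) * eulerSum q (t * q) := by
  have h1 := summable_eTerm hq0 hq1 ht
  have h2 := summable_eTerm hq0 hq1 (mul_nonneg ht hq0.le)
  have hterm : ∀ n : ℕ, eTerm q t (n + 1) - eTerm q (t * q) (n + 1) =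
      t * eTerm q (t * q) n := by
    intro n
    have hP := ne_of_gt (qPoch_q_pos hq0 hq1 n)
    have hne : (1 : ℝ) - q * q ^ n ≠ 0 := ne_of_gt (by have := qq_lt1 hq0 hq1 n; linarith)
    simp only [eTerm, Nat.add_sub_cancel, tri', pow_add, qPoch_succ, mul_pow]
    field_simp
    linear_combination (t * t ^ n) * inv_mul_cancel₀ hne
  have hdiff : eulerSum q t - eulerSum q (t * q) = t * eulerSum q (t * q) := by
    rw [eulerSum, eulerSum, ← Summable.tsum_sub h1 h2, Summable.tsum_eq_zero_add (h1.sub h2)]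
    simp only [hterm, eTerm_zero, sub_self, zero_add]
    rw [tsum_mul_left]
  have : (1 + t) * eulerSum q (t * q) = eulerSum q (t * q) + t * eulerSum q (t * q) := by
    ring
  linarith

set_option maxHeartbeats 1000000 in
lemma euler_prod {q : ℝ} (hq0 : 0 < q) (hq1 : q < 1) {t : ℝ} (ht : 0 ≤ t) :
    eulerSum q t = qPochInf q (-t) := by
  have hiter : ∀ N : ℕ, eulerSum q t = qPoch q (-t) N * eulerSum q (t * q ^ N) := by
    intro N
    induction N with
    | zero => simp [qPoch]
    | succ N ihN =>
      rw [ihN, qPoch_succ]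
      have hN : (0 : ℝ) ≤ t * q ^ N := mul_nonneg ht (pow_nonneg hq0.le N)
      rw [euler_fe hq0 hq1 hN]
      have h2 : t * q ^ N * q = t * q ^ (N + 1) := by ring
      rw [h2]
      ring
  have hpos : ∀ j : ℕ, (0 : ℝ) < 1 - (-t) * q ^ j := by
    intro j
    nlinarith [pow_pos hq0 j, mul_nonneg ht (pow_nonneg hq0.le j)]
  have hlog : Summable (fun j : ℕ => Real.log (1 - (-t) * q ^ j)) := by
    apply Summable.of_nonneg_of_le
      (fun j => Real.log_nonneg (by nlinarith [mul_nonneg ht (pow_nonneg hq0.le j)]))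
      (fun j => ?_) ((summable_geometric_of_lt_one hq0.le hq1).mul_left t)
    have := Real.log_le_sub_one_of_pos (hpos j)
    nlinarith [this]
  have hmul : Multipliable (fun j : ℕ => 1 - (-t) * q ^ j) := by
    exact Real.multipliable_of_summable_log hpos hlog
  have hA : Tendsto (fun N : ℕ => qPoch q (-t) N) atTop (𝓝 (qPochInf q (-t))) := by
    have := hmul.hasProd.tendsto_prod_nat
    simpa [qPoch, qPochInf] using this
  have hupper : ∀ N : ℕ, eulerSum q (t * q ^ N) ≤ 1 + q ^ N * (eulerSum q t - 1) := by
    intro N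
    have hsN : (0 : ℝ) ≤ t * q ^ N := mul_nonneg ht (pow_nonneg hq0.le N)
    have hsums := summable_eTerm hq0 hq1 hsN
    have hsumt := summable_eTerm hq0 hq1 ht
    have h0 : eulerSum q (t * q ^ N) = 1 + ∑' n, eTerm q (t * q ^ N) (n + 1) := by
      rw [eulerSum, Summable.tsum_eq_zero_add hsums, eTerm_zero]
    have h0t : eulerSum q t = 1 + ∑' n, eTerm q t (n + 1) := by
      rw [eulerSum, Summable.tsum_eq_zero_add hsumt, eTerm_zero]
    have hs1 : Summable (fun n : ℕ => eTerm q (t * q ^ N) (n + 1)) :=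
      (summable_nat_add_iff (f := eTerm q (t * q ^ N)) 1).mpr hsums
    have hs2 : Summable (fun n : ℕ => q ^ N * eTerm q t (n + 1)) :=
      ((summable_nat_add_iff (f := eTerm q t) 1).mpr hsumt).mul_left _
    have hle : ∑' n, eTerm q (t * q ^ N) (n + 1) ≤ ∑' n, q ^ N * eTerm q t (n + 1) := by
      refine Summable.tsum_le_tsum (fun n => ?_) hs1 hs2
      have hkey : ((q : ℝ) ^ N) ^ (n + 1) ≤ q ^ N := by
        have h1 : ((q : ℝ) ^ N) ^ (n + 1) = ((q ^ N) ^ n) * q ^ N := by rw [pow_succ]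
        have h2 : ((q : ℝ) ^ N) ^ n ≤ 1 :=
          powle1 (pow_nonneg hq0.le N) (powle1 hq0.le hq1.le N) n
        nlinarith [pow_pos hq0 N]
      have hPpos := qPoch_q_pos hq0 hq1 (n + 1)
      have ht1 : (0 : ℝ) ≤ t ^ (n + 1) := pow_nonneg ht _
      have hqq : (0 : ℝ) ≤ q ^ ((n + 1) * (n + 1 - 1) / 2) := pow_nonneg hq0.le _
      rw [eTerm, eTerm, mul_pow, mul_div_assoc', div_le_div_iff₀ hPpos hPpos]
      nlinarith [mul_le_mul_of_nonneg_right (mul_le_mul_of_nonneg_left hkey ht1) hqq,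
        hPpos.le, mul_nonneg (mul_nonneg ht1 hqq) hPpos.le]
    rw [h0]
    have : ∑' n, q ^ N * eTerm q t (n + 1) = q ^ N * (eulerSum q t - 1) := by
      rw [tsum_mul_left]
      congr 1
      linarith [h0t]
    linarith [hle, this.symm.le, this.le]
  have hlower : ∀ N : ℕ, 1 ≤ eulerSum q (t * q ^ N) := fun N =>
    one_le_eulerSum hq0 hq1 (mul_nonneg ht (pow_nonneg hq0.le N))
  have hB : Tendsto (fun N : ℕ => eulerSum q (t * q ^ N)) atTop (𝓝 1) := by
    have haux : Tendsto (fun N : ℕ => 1 + q ^ N * (eulerSum q t - 1)) atTop (𝓝 1) := by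
      have h := (tendsto_pow_atTop_nhds_zero_of_lt_one hq0.le hq1).mul_const
        (eulerSum q t - 1)
      have h2 := (tendsto_const_nhds (x := (1 : ℝ)) (f := atTop (α := ℕ))).add h
      simpa using h2
    exact tendsto_of_tendsto_of_tendsto_of_le_of_le tendsto_const_nhds haux hlower hupper
  have hconst : Tendsto (fun N : ℕ => qPoch q (-t) N * eulerSum q (t * q ^ N)) atTop
      (𝓝 (eulerSum q t)) := by
    have : (fun N : ℕ => qPoch q (-t) N * eulerSum q (t * q ^ N)) =
        fun _ => eulerSum q t := by
      funext N
      exact (hiter N).symm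
    rw [this]
    exact tendsto_const_nhds
  have := hA.mul hB
  rw [mul_one] at this
  exact tendsto_nhds_unique hconst this

/-! ### The moments Φ -/

lemma phi_rec {q : ℝ} (hq0 : 0 < q) (hq1 : q < 1) {a : ℝ} (ha : 0 ≤ a) (j : ℕ) :
    phiF q a j = (1 + a * q ^ (j + 1)) * phiF q a (j + 1) := by
  have ht : (0 : ℝ) ≤ a * q ^ (j + 1) := mul_nonneg ha (pow_nonneg hq0.le _)
  rw [phiF, euler_fe hq0 hq1 ht]
  have h : a * q ^ (j + 1) * q = a * q ^ (j + 1 + 1) := by ring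
  rw [h]
  rfl

lemma phi_shift {q : ℝ} (hq0 : 0 < q) (hq1 : q < 1) {a : ℝ} (ha : 0 ≤ a) (j : ℕ) :
    ∀ k : ℕ, phiF q a j = qPoch q (-(a * q ^ (j + 1))) k * phiF q a (j + k) := by
  intro k
  induction k with
  | zero => simp [qPoch]
  | succ k ih =>
    rw [qPoch_succ]
    have h1 : phiF q a (j + k) = (1 + a * q ^ ((j + k) + 1)) * phiF q a ((j + k) + 1) :=
      phi_rec hq0 hq1 ha (j + k)
    have h2 : (1 : ℝ) - -(a * q ^ (j + 1)) * q ^ k = 1 + a * q ^ ((j + k) + 1) := by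
      have : (q : ℝ) ^ (j + 1) * q ^ k = q ^ ((j + k) + 1) := by
        rw [← pow_add]; congr 1; omega
      nlinarith [this]
    rw [ih, h1, h2, show (j + k) + 1 = j + (k + 1) from by omega]
    ring

/-! ### The coefficient `Cc` and the key finite sum -/

noncomputable def Cc (q a : ℝ) (m k : ℕ) : ℝ :=
  qPoch q (q ^ (-(m : ℤ))) k * qPoch q (-a * q ^ m) k / qPoch q q k

lemma Cc_def (q a : ℝ) (m k : ℕ) :
    Cc q a m k = qPoch q (q ^ (-(m : ℤ))) k * qPoch q (-a * q ^ m) k / qPoch q q k := rfl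

lemma Cc_eq (q a : ℝ) (m k : ℕ) : Cc q a m k = Aq q m k * qPoch q (-a * q ^ m) k := by
  rw [Cc, Aq, mul_div_right_comm]

lemma key {q a : ℝ} (hq0 : 0 < q) (hq1 : q < 1) (ha : 0 < a) (m j : ℕ) :
    ∑ k ∈ Finset.range (m + 1), Cc q a m k * q ^ k * phiF q a (k + j) =
      phiF q a j * (∏ i ∈ Finset.range m, (a * q ^ (j + 1) * q ^ i - a * q ^ m)) /
        qPoch q (-(a * q ^ (j + 1))) m := by
  have hcneg : -(a * q ^ (j + 1)) ≤ 0 := by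
    have : (0 : ℝ) ≤ a * q ^ (j + 1) := by positivity
    linarith
  have hcpos : ∀ n : ℕ, 0 < qPoch q (-(a * q ^ (j + 1))) n := fun n =>
    qPoch_pos_of_nonpos hq0 hcneg n
  have hstep : ∀ k ∈ Finset.range (m + 1), Cc q a m k * q ^ k * phiF q a (k + j) =
      (Aq q m k * qPoch q (-a * q ^ m) k * q ^ k *
        ∏ i ∈ Finset.range (m - k), (1 - -(a * q ^ (j + 1)) * q ^ (k + i))) *
      (phiF q a j / qPoch q (-(a * q ^ (j + 1))) m) := by
    intro k hk
    have hk' : k ≤ m := by have := Finset.mem_range.mp hk; omega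
    have hphi : phiF q a (k + j) = phiF q a j / qPoch q (-(a * q ^ (j + 1))) k := by
      rw [eq_div_iff (ne_of_gt (hcpos k)), mul_comm, show k + j = j + k from by omega]
      exact (phi_shift hq0 hq1 ha.le j k).symm
    rw [hphi, Cc_eq]
    rw [qPoch_split q (-(a * q ^ (j + 1))) hk']
    have h1 : qPoch q (-(a * q ^ (j + 1))) k ≠ 0 := ne_of_gt (hcpos k)
    have h2 : ∏ i ∈ Finset.range (m - k), (1 - -(a * q ^ (j + 1)) * q ^ (k + i)) ≠ 0 := by
      apply ne_of_gt
      apply Finset.prod_pos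
      intro i _
      nlinarith [pow_pos hq0 (k + i), mul_pos ha (pow_pos hq0 (j + 1)),
        mul_pos (mul_pos ha (pow_pos hq0 (j + 1))) (pow_pos hq0 (k + i))]
    field_simp
    exact (mul_div_cancel_right₀ _ (by simpa only [neg_mul] using h2)).symm
  rw [Finset.sum_congr rfl hstep, ← Finset.sum_mul,
    vdm hq0 hq1 (-a * q ^ m) m (-(a * q ^ (j + 1)))]
  have hpr : ∏ i ∈ Finset.range m, (-a * q ^ m - -(a * q ^ (j + 1)) * q ^ i) =
      ∏ i ∈ Finset.range m, (a * q ^ (j + 1) * q ^ i - a * q ^ m) := by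
    apply Finset.prod_congr rfl
    intro i _
    ring
  rw [hpr]
  ring

lemma key_prod_zero {q a : ℝ} (hq0 : 0 < q) {m j : ℕ} (hj : j < m) :
    ∏ i ∈ Finset.range m, (a * q ^ (j + 1) * q ^ i - a * q ^ m) = 0 := by
  apply Finset.prod_eq_zero (i := m - 1 - j) (Finset.mem_range.mpr (by omega))
  have h : (q : ℝ) ^ (j + 1) * q ^ (m - 1 - j) = q ^ m := by
    rw [← pow_add]; congr 1; omega
  rw [mul_assoc, h, sub_self]

/-! ### Expansion of the full sum -/

lemma expand {q a : ℝ} (hq0 : 0 < q) (hq1 : q < 1) (ha : 0 < a) (m m' : ℕ) :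
    ∑' n : ℕ, a ^ n * q ^ (n * (n + 1) / 2) / qPoch q q n *
        altQCharlier q a m (q ^ n) * altQCharlier q a m' (q ^ n) =
      ∑ j ∈ Finset.range (m' + 1), Cc q a m' j * q ^ j *
        (phiF q a j * (∏ i ∈ Finset.range m, (a * q ^ (j + 1) * q ^ i - a * q ^ m)) /
          qPoch q (-(a * q ^ (j + 1))) m) := by
  have hP := qPoch_q_pos hq0 hq1
  have hpt : ∀ n : ℕ, a ^ n * q ^ (n * (n + 1) / 2) / qPoch q q n *
      altQCharlier q a m (q ^ n) * altQCharlier q a m' (q ^ n) =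
      ∑ k ∈ Finset.range (m + 1), ∑ j ∈ Finset.range (m' + 1),
        (Cc q a m k * Cc q a m' j * q ^ (k + j)) * eTerm q (a * q ^ ((k + j) + 1)) n := by
    intro n
    rw [altQCharlier, altQCharlier]
    simp only [← Cc_def]
    rw [mul_assoc, Finset.sum_mul_sum, Finset.mul_sum]
    apply Finset.sum_congr rfl
    intro k _
    rw [Finset.mul_sum]
    apply Finset.sum_congr rfl
    intro j _
    have hPn := ne_of_gt (hP n)
    rw [eTerm, tri n, pow_add]
    have e1 : (a * q ^ (k + j + 1)) ^ n = a ^ n * (q ^ n) ^ (k + j + 1) := by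
      rw [mul_pow, ← pow_mul, mul_comm (k + j + 1) n, pow_mul]
    have e2 : ((q : ℝ) * q ^ n) ^ k = q ^ k * (q ^ n) ^ k := mul_pow _ _ _
    have e3 : ((q : ℝ) * q ^ n) ^ j = q ^ j * (q ^ n) ^ j := mul_pow _ _ _
    rw [e1, e2, e3]
    have e4 : ((q : ℝ) ^ n) ^ (k + j + 1) = (q ^ n) ^ k * (q ^ n) ^ j * q ^ n := by
      rw [pow_add, pow_add, pow_one]
    rw [e4]
    field_simp
    ring
  rw [tsum_congr hpt]
  have hSum : ∀ k j : ℕ, Summable (fun n : ℕ =>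
      (Cc q a m k * Cc q a m' j * q ^ (k + j)) * eTerm q (a * q ^ ((k + j) + 1)) n) :=
    fun k j => (summable_eTerm hq0 hq1 (by positivity)).mul_left _
  rw [Summable.tsum_finsetSum (fun k _ => summable_sum fun j _ => hSum k j)]
  have h1 : ∀ k ∈ Finset.range (m + 1),
      (∑' n : ℕ, ∑ j ∈ Finset.range (m' + 1),
        (Cc q a m k * Cc q a m' j * q ^ (k + j)) * eTerm q (a * q ^ ((k + j) + 1)) n) =
      ∑ j ∈ Finset.range (m' + 1),
        (Cc q a m k * Cc q a m' j * q ^ (k + j)) * phiF q a (k + j) := by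
    intro k _
    rw [Summable.tsum_finsetSum (fun j _ => hSum k j)]
    apply Finset.sum_congr rfl
    intro j _
    rw [tsum_mul_left]
    rfl
  rw [Finset.sum_congr rfl h1, Finset.sum_comm]
  apply Finset.sum_congr rfl
  intro j _
  rw [← key hq0 hq1 ha m j, Finset.mul_sum]
  apply Finset.sum_congr rfl
  intro k _
  rw [pow_add]
  ring

lemma final_alg (A T Pb Pc P Phi I y z s am u v : ℝ) (hT : T ≠ 0) (hPc : Pc ≠ 0)
    (hu : u ≠ 0) (hv : v ≠ 0) (h1 : A * T = s) (h2 : T * T = y * z) (h3 : s * s = 1)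
    (h4 : Pb * v = u * Pc) (h5 : u * Phi = I) :
    A * Pb * y * (Phi * (s * (am * z) * P) / Pc) = I * am * P / v * T := by
  have hA : A = s / T := by rw [eq_div_iff hT]; exact h1
  have hPhi : Phi = I / u := by rw [eq_div_iff hu]; linarith [h5]
  have hPb : Pb = u * Pc / v := by rw [eq_div_iff hv]; exact h4
  rw [hA, hPhi, hPb]
  field_simp
  linear_combination (I * am * P * y * z) * h3 - (I * am * P) * h2


end AltQC

set_option maxHeartbeats 1000000 in
open AltQC Finset in
theorem altQCharlier_orthogonality
    (q a : ℝ) (hq0 : 0 < q) (hq1 : q < 1) (ha : 0 < a) (m m' : ℕ) :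
    Summable (fun n : ℕ =>
      |a ^ n * q ^ (n * (n + 1) / 2) / qPoch q q n *
        altQCharlier q a m (q ^ n) * altQCharlier q a m' (q ^ n)|) ∧
    ∑' n : ℕ,
        a ^ n * q ^ (n * (n + 1) / 2) / qPoch q q n *
          altQCharlier q a m (q ^ n) * altQCharlier q a m' (q ^ n) =
      qPochInf q (-a * q ^ m) * a ^ m * qPoch q q m / (1 + a * q ^ (2 * m)) *
        q ^ (m * (m + 1) / 2) * (if m = m' then 1 else 0) := by
  have hP := qPoch_q_pos hq0 hq1
  have hW : ∀ n : ℕ, a ^ n * q ^ (n * (n + 1) / 2) / qPoch q q n = eTerm q (a * q) n := by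
    intro n
    rw [eTerm, tri n, pow_add, mul_pow]
    ring
  have hKb : ∀ (M n : ℕ), |altQCharlier q a M (q ^ n)| ≤
      ∑ k ∈ Finset.range (M + 1), |Cc q a M k| := by
    intro M n
    rw [altQCharlier]
    refine (Finset.abs_sum_le_sum_abs _ _).trans (Finset.sum_le_sum fun k _ => ?_)
    have h1 : |((q : ℝ) * q ^ n) ^ k| ≤ 1 := by
      rw [abs_pow]
      apply powle1 (abs_nonneg _)
      rw [abs_of_nonneg (by positivity)]
      exact (qq_lt1 hq0 hq1 n).le
    calc |qPoch q (q ^ (-(M : ℤ))) k * qPoch q (-a * q ^ M) k / qPoch q q k *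
            (q * q ^ n) ^ k|
        = |Cc q a M k| * |((q : ℝ) * q ^ n) ^ k| := by rw [← Cc_def, abs_mul]
      _ ≤ |Cc q a M k| * 1 := mul_le_mul_of_nonneg_left h1 (abs_nonneg _)
      _ = |Cc q a M k| := mul_one _
  have hWnn : ∀ n : ℕ, 0 ≤ eTerm q (a * q) n :=
    eTerm_nonneg hq0 hq1 (by positivity)
  have hbound : ∀ n : ℕ, |a ^ n * q ^ (n * (n + 1) / 2) / qPoch q q n *
      altQCharlier q a m (q ^ n) * altQCharlier q a m' (q ^ n)| ≤
      (∑ k ∈ Finset.range (m + 1), |Cc q a m k|) *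
        (∑ k ∈ Finset.range (m' + 1), |Cc q a m' k|) * eTerm q (a * q) n := by
    intro n
    rw [abs_mul, abs_mul, abs_div, abs_of_nonneg (by positivity : (0:ℝ) ≤ a ^ n * q ^ (n * (n + 1) / 2)),
      abs_of_nonneg (hP n).le, hW n]
    have s1 : eTerm q (a * q) n * |altQCharlier q a m (q ^ n)| ≤
        eTerm q (a * q) n * (∑ k ∈ Finset.range (m + 1), |Cc q a m k|) :=
      mul_le_mul_of_nonneg_left (hKb m n) (hWnn n)
    have s2 : eTerm q (a * q) n * |altQCharlier q a m (q ^ n)| *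
        |altQCharlier q a m' (q ^ n)| ≤
        eTerm q (a * q) n * (∑ k ∈ Finset.range (m + 1), |Cc q a m k|) *
          |altQCharlier q a m' (q ^ n)| :=
      mul_le_mul_of_nonneg_right s1 (abs_nonneg _)
    have hnn2 : 0 ≤ eTerm q (a * q) n * (∑ k ∈ Finset.range (m + 1), |Cc q a m k|) :=
      mul_nonneg (hWnn n) (Finset.sum_nonneg fun k _ => abs_nonneg _)
    have s3 : eTerm q (a * q) n * (∑ k ∈ Finset.range (m + 1), |Cc q a m k|) *
        |altQCharlier q a m' (q ^ n)| ≤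
        eTerm q (a * q) n * (∑ k ∈ Finset.range (m + 1), |Cc q a m k|) *
          (∑ k ∈ Finset.range (m' + 1), |Cc q a m' k|) :=
      mul_le_mul_of_nonneg_left (hKb m' n) hnn2
    calc eTerm q (a * q) n * |altQCharlier q a m (q ^ n)| * |altQCharlier q a m' (q ^ n)|
        ≤ eTerm q (a * q) n * (∑ k ∈ Finset.range (m + 1), |Cc q a m k|) *
          (∑ k ∈ Finset.range (m' + 1), |Cc q a m' k|) := le_trans s2 s3
      _ = (∑ k ∈ Finset.range (m + 1), |Cc q a m k|) *
            (∑ k ∈ Finset.range (m' + 1), |Cc q a m' k|) * eTerm q (a * q) n := by ring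
  have habs : Summable (fun n : ℕ =>
      |a ^ n * q ^ (n * (n + 1) / 2) / qPoch q q n *
        altQCharlier q a m (q ^ n) * altQCharlier q a m' (q ^ n)|) :=
    Summable.of_nonneg_of_le (fun n => abs_nonneg _) hbound
      ((summable_eTerm hq0 hq1 (by positivity)).mul_left _)
  refine ⟨habs, ?_⟩
  rcases lt_trichotomy m m' with hlt | heq | hgt
  · -- m < m' : swap the two polynomials and use vanishing
    have hswap : ∀ n : ℕ, a ^ n * q ^ (n * (n + 1) / 2) / qPoch q q n *
        altQCharlier q a m (q ^ n) * altQCharlier q a m' (q ^ n) =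
        a ^ n * q ^ (n * (n + 1) / 2) / qPoch q q n *
        altQCharlier q a m' (q ^ n) * altQCharlier q a m (q ^ n) := fun n => by ring
    rw [tsum_congr hswap, expand hq0 hq1 ha m' m]
    have h0 : ∀ j ∈ Finset.range (m + 1), Cc q a m j * q ^ j *
        (phiF q a j * (∏ i ∈ Finset.range m', (a * q ^ (j + 1) * q ^ i - a * q ^ m')) /
          qPoch q (-(a * q ^ (j + 1))) m') = 0 := by
      intro j hj
      have hjm : j < m' := by have := Finset.mem_range.mp hj; omega
      rw [key_prod_zero hq0 hjm]
      simp
    rw [Finset.sum_eq_zero h0, if_neg (by omega), mul_zero]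
  · -- m = m'
    subst heq
    rw [expand hq0 hq1 ha m m]
    have h0 : ∀ j ∈ Finset.range (m + 1), j ≠ m → Cc q a m j * q ^ j *
        (phiF q a j * (∏ i ∈ Finset.range m, (a * q ^ (j + 1) * q ^ i - a * q ^ m)) /
          qPoch q (-(a * q ^ (j + 1))) m) = 0 := by
      intro j hj hne
      have hjm : j < m := by have := Finset.mem_range.mp hj; omega
      rw [key_prod_zero hq0 hjm]
      simp
    rw [Finset.sum_eq_single_of_mem m (Finset.self_mem_range_succ m) h0]
    rw [if_pos rfl, mul_one]
    -- now the single-term computation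
    have hprodm : ∏ i ∈ Finset.range m, (a * q ^ (m + 1) * q ^ i - a * q ^ m) =
        (-(a * q ^ m)) ^ m * qPoch q q m := by
      have hcongr : ∀ i ∈ Finset.range m, a * q ^ (m + 1) * q ^ i - a * q ^ m =
          (-(a * q ^ m)) * (1 - q * q ^ i) := fun i _ => by ring
      rw [Finset.prod_congr rfl hcongr, Finset.prod_mul_distrib, Finset.prod_const,
        Finset.card_range, qPoch]
    have hdiag := Aq_diag hq0 hq1 m
    have hqmm : (q : ℝ) ^ m * q ^ (m * m) = q ^ (m * (m + 1) / 2) * q ^ (m * (m + 1) / 2) := by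
      rw [← pow_add, ← pow_add]
      congr 1
      exact twoT m
    have h1m : (0:ℝ) < 1 + a * q ^ m := by positivity
    have h2m : (0:ℝ) < 1 + a * q ^ (2 * m) := by positivity
    have htel : qPoch q (-a * q ^ m) m * (1 + a * q ^ (2 * m)) =
        (1 + a * q ^ m) * qPoch q (-(a * q ^ (m + 1))) m := by
      have e : (1 : ℝ) - (-a * q ^ m) * q ^ m = 1 + a * q ^ (2 * m) := by
        rw [two_mul, pow_add]; ring
      have h1 : qPoch q (-a * q ^ m) m * (1 + a * q ^ (2 * m)) =
          qPoch q (-a * q ^ m) (m + 1) := by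
        rw [qPoch_succ, e]
      rw [h1, qPoch, Finset.prod_range_succ']
      have hcongr : ∀ i ∈ Finset.range m, (1 : ℝ) - -a * q ^ m * q ^ (i + 1) =
          1 - -(a * q ^ (m + 1)) * q ^ i := by
        intro i _
        have : (q:ℝ) ^ m * q ^ (i + 1) = q ^ (m + 1) * q ^ i := by
          rw [← pow_add, ← pow_add]; congr 1; omega
        nlinarith [this]
      rw [Finset.prod_congr rfl hcongr]
      rw [qPoch]
      ring
    have hphiI : (1 + a * q ^ m) * phiF q a m = qPochInf q (-a * q ^ m) := by
      have h1 : eulerSum q (a * q ^ m) = qPochInf q (-(a * q ^ m)) :=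
        euler_prod hq0 hq1 (by positivity)
      have h2 : eulerSum q (a * q ^ m) = (1 + a * q ^ m) * eulerSum q (a * q ^ m * q) :=
        euler_fe hq0 hq1 (by positivity)
      have h3 : a * q ^ m * q = a * q ^ (m + 1) := by ring
      rw [h3] at h2
      have h4 : -(a * q ^ m) = -a * q ^ m := by ring
      rw [h4] at h1
      rw [← h1, h2]
      rfl
    have hPc : (0:ℝ) < qPoch q (-(a * q ^ (m + 1))) m := by
      apply qPoch_pos_of_nonpos hq0
      have : (0:ℝ) ≤ a * q ^ (m + 1) := by positivity
      linarith
    have hPb : (0:ℝ) < qPoch q (-a * q ^ m) m := by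
      apply qPoch_pos_of_nonpos hq0
      have : (0:ℝ) ≤ a * q ^ m := by positivity
      linarith
    have hTne : (q : ℝ) ^ (m * (m + 1) / 2) ≠ 0 := pow_ne_zero _ (ne_of_gt hq0)
    have hAq : Aq q m m = (-1 : ℝ) ^ m / q ^ (m * (m + 1) / 2) := by
      rw [eq_div_iff hTne]; exact hdiag
    have hphi : phiF q a m = qPochInf q (-a * q ^ m) / (1 + a * q ^ m) := by
      rw [eq_div_iff (ne_of_gt h1m), mul_comm]
      exact hphiI
    have hPcval : qPoch q (-(a * q ^ (m + 1))) m =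
        qPoch q (-a * q ^ m) m * (1 + a * q ^ (2 * m)) / (1 + a * q ^ m) := by
      rw [eq_div_iff (ne_of_gt h1m)]
      linear_combination -htel
    have hneg : (-(a * q ^ m)) ^ m = (-1 : ℝ) ^ m * (a ^ m * q ^ (m * m)) := by
      rw [neg_pow, mul_pow, ← pow_mul]
    have hnegone : (-1 : ℝ) ^ m * (-1 : ℝ) ^ m = 1 := by
      rw [← pow_add]
      exact Even.neg_one_pow ⟨m, rfl⟩
    rw [Cc_eq, hprodm, hneg]
    exact final_alg (Aq q m m) _ _ _ _ _ _ _ _ _ _ _ _ hTne (ne_of_gt hPc)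
      (ne_of_gt h1m) (ne_of_gt h2m) hdiag hqmm.symm hnegone htel hphiI
  · -- m' < m
    rw [expand hq0 hq1 ha m m']
    have h0 : ∀ j ∈ Finset.range (m' + 1), Cc q a m' j * q ^ j *
        (phiF q a j * (∏ i ∈ Finset.range m, (a * q ^ (j + 1) * q ^ i - a * q ^ m)) /
          qPoch q (-(a * q ^ (j + 1))) m) = 0 := by
      intro j hj
      have hjm : j < m := by have := Finset.mem_range.mp hj; omega
      rw [key_prod_zero hq0 hjm]
      simp
    rw [Finset.sum_eq_zero h0, if_neg (by omega), mul_zero]
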